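/- Let P be a connected, non-separable type-C poset of height (1,1) such that the relation graph RG(P) contains a self-loop. Then there exists a connected type-C poset P' of height (0,1) such that |V(P)| = |V(P')|, |E(P)| = |E(P')|, RG(P') contains a self-loop, and ind g_C(P) = ind g_C(P'). -/

import Mathlib

open scoped DirectSum

namespace LiePoset

/-- A type-C poset on the ground set `{-n, …, -1, 1, …, n} ⊆ ℤ`:
a partial order `le` supported on that set such that `i ≼ j` implies `i ≤ j` in `ℤ`,
and for `i ≠ -j`, `i ≼ j ↔ -j ≼ -i`. -/
structure TypeCPoset (n : ℕ) where
  le : ℤ → ℤ → Prop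
  supp : ∀ ⦃i j : ℤ⦄, le i j → i ≠ 0 ∧ |i| ≤ (n : ℤ) ∧ j ≠ 0 ∧ |j| ≤ (n : ℤ)
  refl : ∀ i : ℤ, i ≠ 0 → |i| ≤ (n : ℤ) → le i i
  antisymm : ∀ ⦃i j : ℤ⦄, le i j → le j i → i = j
  trans : ∀ ⦃i j k : ℤ⦄, le i j → le j k → le i k
  compat : ∀ ⦃i j : ℤ⦄, le i j → i ≤ j
  nsymm : ∀ ⦃i j : ℤ⦄, i ≠ -j → (le i j ↔ le (-j) (-i))

namespace TypeCPoset

variable {n : ℕ}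

/-- The strict relation `i ≺ j` of a type-C poset. -/
def lt (P : TypeCPoset n) (i j : ℤ) : Prop := P.le i j ∧ i ≠ j

/-- `P` has height one: every chain of `P` has cardinality at most two. -/
def HeightOne (P : TypeCPoset n) : Prop := ∀ i j k : ℤ, P.lt i j → P.lt j k → False

/-- `P` is separable: there is no relation `x ≺ y` with `x` negative and `y` positive. -/
def Separable (P : TypeCPoset n) : Prop := ∀ i j : ℤ, i < 0 → 0 < j → ¬ P.lt i j

/-- `P` has height `(1,1)`: `P⁺` has height exactly one and `P` has height exactly one. -/
def Height11 (P : TypeCPoset n) : Prop :=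
  P.HeightOne ∧ ∃ i j : ℤ, 0 < i ∧ 0 < j ∧ P.lt i j

/-- `P` has height `(0,1)`: `P⁺` has height zero and `P` has height exactly one. -/
def Height01 (P : TypeCPoset n) : Prop :=
  P.HeightOne ∧ (∀ i j : ℤ, 0 < i → 0 < j → ¬ P.lt i j) ∧ ∃ i j : ℤ, P.lt i j

end TypeCPoset

/-- The vertex set of the relation graph: the positive elements `{1, …, n}`. -/
abbrev Pos (n : ℕ) : Type := {i : ℤ // i ∈ Finset.Icc (1 : ℤ) (n : ℤ)}

/-- The matrix index set `{-n, …, -1, 1, …, n}`. -/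
abbrev Idx (n : ℕ) : Type := {i : ℤ // i ∈ (Finset.Icc (-(n : ℤ)) (n : ℤ)).erase 0}

/-- Negation on the index set. -/
def Idx.neg {n : ℕ} (a : Idx n) : Idx n :=
  ⟨-a.val, by
    have h := a.property
    simp only [Finset.mem_erase, Finset.mem_Icc] at h ⊢
    omega⟩

/-- A positive vertex as a matrix index. -/
def Pos.toIdx {n : ℕ} (i : Pos n) : Idx n :=
  ⟨i.val, by
    have h := i.property
    simp only [Finset.mem_erase, Finset.mem_Icc] at h ⊢
    omega⟩

/-- `2n × 2n` complex matrices, with rows and columns indexed by `{-n, …, -1, 1, …, n}`. -/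
abbrev Mat (n : ℕ) : Type := Matrix (Idx n) (Idx n) ℂ

namespace TypeCPoset

variable {n : ℕ}

/-- `D_i = E_{-i,-i} - E_{i,i}`. -/
def Dmat (i : Pos n) : Mat n :=
  Matrix.single i.toIdx.neg i.toIdx.neg 1 - Matrix.single i.toIdx i.toIdx 1

/-- `R^±_{i,j} = E_{-i,j} + E_{-j,i}`. -/
def Rpm (i j : Pos n) : Mat n :=
  Matrix.single i.toIdx.neg j.toIdx 1 + Matrix.single j.toIdx.neg i.toIdx 1

/-- `R_{i,j} = E_{-j,-i} - E_{i,j}`. -/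
def Rdash (i j : Pos n) : Mat n :=
  Matrix.single j.toIdx.neg i.toIdx.neg 1 - Matrix.single i.toIdx j.toIdx 1

/-- `E_{-i,i}`. -/
def Eloop (i : Pos n) : Mat n := Matrix.single i.toIdx.neg i.toIdx 1

/-- The standard spanning set of the type-C Lie poset algebra `g_C(P)`. -/
def gcSet (P : TypeCPoset n) : Set (Mat n) :=
  {M | (∃ i : Pos n, M = Dmat i)
      ∨ (∃ i j : Pos n, P.lt (-j.val) (-i.val) ∧ M = Rdash i j)
      ∨ (∃ i j : Pos n, P.lt (-i.val) j.val ∧ P.lt (-j.val) i.val ∧ M = Rpm i j)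
      ∨ (∃ i : Pos n, P.lt (-i.val) i.val ∧ M = Eloop i)}

/-- The simple graph underlying the relation graph `RG(P)`:
vertices `{1, …, n}`, with `i` adjacent to `j` (for `i ≠ j`) whenever there is a
(dashed or non-dashed) edge between them. -/
def RG (P : TypeCPoset n) : SimpleGraph (Pos n) where
  Adj i j := i ≠ j ∧ (P.lt (-i.val) j.val ∨ P.lt (-j.val) i.val ∨
      P.lt (-i.val) (-j.val) ∨ P.lt (-j.val) (-i.val))
  symm := by
    constructor
    intro i j h
    exact ⟨h.1.symm, by tauto⟩
  loopless := by
    constructor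
    intro i h
    exact h.1 rfl

/-- `RG(P)` has a (non-dashed) self-loop at vertex `i`, i.e. `-i ≺ i`. -/
def HasLoopAt (P : TypeCPoset n) (i : Pos n) : Prop := P.lt (-i.val) i.val

/-- There is a dashed edge `{i,j}` in `RG(P)`. -/
def DashedEdge (P : TypeCPoset n) (i j : Pos n) : Prop :=
  P.lt (-i.val) (-j.val) ∨ P.lt (-j.val) (-i.val)

/-- There is a non-dashed edge `{i,j}` in `RG(P)` (a self-loop when `i = j`). -/
def NonDashedEdge (P : TypeCPoset n) (i j : Pos n) : Prop :=
  P.lt (-i.val) j.val ∨ P.lt (-j.val) i.val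

open scoped Classical in
/-- The set of non-dashed edges of `RG(P)` (including self-loops). -/
noncomputable def edgesND (P : TypeCPoset n) : Finset (Sym2 (Pos n)) :=
  Finset.univ.filter fun e => ∃ i j : Pos n, e = Sym2.mk i j ∧ NonDashedEdge P i j

open scoped Classical in
/-- The set of dashed edges of `RG(P)`. -/
noncomputable def edgesD (P : TypeCPoset n) : Finset (Sym2 (Pos n)) :=
  Finset.univ.filter fun e => ∃ i j : Pos n, e = Sym2.mk i j ∧ i ≠ j ∧ DashedEdge P i j

/-- `|E(P)|`, the number of edges of `RG(P)`. -/
noncomputable def numEdges (P : TypeCPoset n) : ℕ := (P.edgesND).card + (P.edgesD).card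

/-- The cycles of `RG(P)`, recorded by their edge sets: a self-loop at `v`, or a cycle
of the underlying simple graph.  A cycle has an odd (resp. even) number of vertices
iff its edge set has odd (resp. even) cardinality. -/
def cycles (P : TypeCPoset n) : Set (Finset (Sym2 (Pos n))) :=
  {s | ∃ v : Pos n, P.HasLoopAt v ∧ s = {Sym2.mk v v}} ∪
  {s | ∃ (v : Pos n) (p : (RG P).Walk v v), p.IsCycle ∧ s = p.edges.toFinset}

/-- The cycles of `RG(P)` contained in the connected component `c`. -/
def cyclesIn (P : TypeCPoset n) (c : (RG P).ConnectedComponent) :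
    Set (Finset (Sym2 (Pos n))) :=
  {s | ∃ v : Pos n, (RG P).connectedComponentMk v = c ∧
    ((P.HasLoopAt v ∧ s = {Sym2.mk v v}) ∨
      ∃ p : (RG P).Walk v v, p.IsCycle ∧ s = p.edges.toFinset)}

/-- `η(P)`: the number of connected components of `RG(P)` containing no odd cycles. -/
noncomputable def eta (P : TypeCPoset n) : ℕ :=
  Nat.card {c : (RG P).ConnectedComponent // ¬ ∃ s ∈ P.cyclesIn c, Odd s.card}

/-- The vertices visited by a cycle, recorded by its edge set. -/
def cycleVerts (s : Finset (Sym2 (Pos n))) : Set (Pos n) := {v | ∃ e ∈ s, v ∈ e}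

end TypeCPoset

section LieDefs

variable (L : Type*) [LieRing L] [LieAlgebra ℂ L]

/-- The kernel of the bilinear form `B_φ(x, y) = φ⁅x, y⁆`. -/
def coadjKernel (φ : Module.Dual ℂ L) : Submodule ℂ L where
  carrier := {x | ∀ y : L, φ ⁅x, y⁆ = 0}
  add_mem' := by
    intro a b ha hb y
    simp only [Set.mem_setOf_eq] at ha hb ⊢
    rw [add_lie, map_add, ha y, hb y, add_zero]
  zero_mem' := by
    intro y
    rw [zero_lie, map_zero]
  smul_mem' := by
    intro c x hx y
    simp only [Set.mem_setOf_eq] at hx ⊢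
    rw [smul_lie, map_smul, hx y, smul_zero]

/-- The index of a Lie algebra: `ind g = min_{φ ∈ g*} dim ker(B_φ)`. -/
noncomputable def lieIndex : ℕ :=
  sInf (Set.range fun φ : Module.Dual ℂ L => Module.finrank ℂ (coadjKernel L φ))

/-- `φ` is a contact form on `L`: `L` is odd-dimensional and the restriction of
`B_φ(x, y) = φ⁅x, y⁆` to `ker φ` is nondegenerate. -/
def IsContactForm (φ : Module.Dual ℂ L) : Prop :=
  Odd (Module.finrank ℂ L) ∧
    ∀ x : L, φ x = 0 → (∀ y : L, φ y = 0 → φ ⁅x, y⁆ = 0) → x = 0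

/-- `L` is a contact Lie algebra. -/
def IsContact : Prop := ∃ φ : Module.Dual ℂ L, IsContactForm L φ

end LieDefs

end LiePoset

namespace LiePoset

attribute [local instance 100] LieRing.ofAssociativeRing

open TypeCPoset

section Aux

variable {n : ℕ}

lemma Pos.pos (i : Pos n) : 0 < i.val := by
  have := i.property
  simp only [Finset.mem_Icc] at this
  omega

lemma lt_nsymm (P : TypeCPoset n) {i j : ℤ} (h : i ≠ -j) :
    P.lt i j ↔ P.lt (-j) (-i) := by
  unfold TypeCPoset.lt
  rw [P.nsymm h]
  constructor <;> rintro ⟨h1, h2⟩ <;> exact ⟨h1, by omega⟩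

/-- `i` is a positive element that is strictly below another positive element. -/
def inS (P : TypeCPoset n) (i : ℤ) : Prop := 0 < i ∧ ∃ j : ℤ, P.lt i j ∧ 0 < j

lemma notinS_top (P : TypeCPoset n) (h1 : P.HeightOne) {x i : ℤ} (h : P.lt x i) :
    ¬ inS P i := by
  rintro ⟨-, j, hij, -⟩
  exact h1 x i j h hij

/-- The disjunction describing edges of `RG(P)` between `-x` and `y`. -/
def Drel (P : TypeCPoset n) (x y : ℤ) : Prop :=
  P.lt x y ∨ P.lt (-y) (-x) ∨ P.lt (-x) y ∨ P.lt y (-x)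

/-- The height-(0,1) poset obtained from `P` by pushing all dashed edges down. -/
def flat (P : TypeCPoset n) : TypeCPoset n where
  le x y := (x = y ∧ x ≠ 0 ∧ |x| ≤ (n : ℤ)) ∨ (x < 0 ∧ 0 < y ∧ Drel P x y)
  supp := by
    rintro i j (⟨rfl, h0, hn⟩ | ⟨hx, hy, hD⟩)
    · exact ⟨h0, hn, h0, hn⟩
    · rcases hD with h | h | h | h <;>
      · have := P.supp h.1
        simp only [abs_le] at this ⊢
        omega
  refl := fun i h0 hn => Or.inl ⟨rfl, h0, hn⟩
  antisymm := by
    rintro i j (⟨rfl, -, -⟩ | ⟨hx, hy, -⟩) h2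
    · rfl
    · rcases h2 with ⟨rfl, -, -⟩ | ⟨hx', hy', -⟩
      · rfl
      · omega
  trans := by
    rintro i j k (⟨rfl, -, -⟩ | ⟨hx, hy, hD⟩) h2
    · exact h2
    · rcases h2 with ⟨rfl, -, -⟩ | ⟨hx', hy', -⟩
      · exact Or.inr ⟨hx, hy, hD⟩
      · omega
  compat := by
    rintro i j (⟨rfl, -, -⟩ | ⟨hx, hy, -⟩) <;> omega
  nsymm := by
    intro i j hij
    constructor
    · rintro (⟨rfl, h0, hn⟩ | ⟨hx, hy, hD⟩)
      · exact Or.inl ⟨rfl, by omega, by simpa [abs_neg] using hn⟩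
      · refine Or.inr ⟨by omega, by omega, ?_⟩
        unfold Drel at hD ⊢
        simp only [neg_neg]
        tauto
    · rintro (⟨hji, h0, hn⟩ | ⟨hx, hy, hD⟩)
      · exact Or.inl ⟨by omega, by omega, by rw [abs_le] at hn ⊢; omega⟩
      · refine Or.inr ⟨by omega, by omega, ?_⟩
        unfold Drel at hD ⊢
        simp only [neg_neg] at hD
        tauto

lemma flat_lt_iff (P : TypeCPoset n) {x y : ℤ} :
    (flat P).lt x y ↔ x < 0 ∧ 0 < y ∧ Drel P x y := by
  constructor
  · rintro ⟨hle, hne⟩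
    rcases hle with ⟨rfl, -, -⟩ | h
    · exact absurd rfl hne
    · exact h
  · rintro ⟨hx, hy, hD⟩
    exact ⟨Or.inr ⟨hx, hy, hD⟩, by omega⟩

lemma flat_lt_pos (P : TypeCPoset n) (i j : Pos n) :
    (flat P).lt (-i.val) j.val ↔
      (P.lt (-i.val) j.val ∨ P.lt (-j.val) i.val ∨ P.lt i.val j.val ∨ P.lt j.val i.val) := by
  have hi := Pos.pos i
  have hj := Pos.pos j
  rw [flat_lt_iff]
  unfold Drel
  simp only [neg_neg]
  constructor
  · rintro ⟨-, -, h⟩; exact h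
  · intro h; exact ⟨by omega, by omega, h⟩

lemma flat_lt_negneg (P : TypeCPoset n) (i j : Pos n) :
    ¬ (flat P).lt (-i.val) (-j.val) := by
  rw [flat_lt_iff]
  have := Pos.pos j
  rintro ⟨-, h, -⟩
  omega

lemma flat_heightOne (P : TypeCPoset n) : (flat P).HeightOne := by
  intro i j k h1 h2
  rw [flat_lt_iff] at h1 h2
  omega

lemma lt_negneg_iff (P : TypeCPoset n) (i j : Pos n) :
    P.lt (-i.val) (-j.val) ↔ P.lt j.val i.val := by
  have hi := Pos.pos i
  have hj := Pos.pos j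
  rw [lt_nsymm P (show (-i.val) ≠ -(-j.val) by omega), neg_neg, neg_neg]

lemma lt_posneg_iff (P : TypeCPoset n) (i j : Pos n) :
    P.lt i.val j.val ↔ P.lt (-j.val) (-i.val) := by
  have hi := Pos.pos i
  have hj := Pos.pos j
  exact lt_nsymm P (by omega)

lemma lt_negpos_iff (P : TypeCPoset n) (i j : Pos n) (hij : i ≠ j) :
    P.lt (-i.val) j.val ↔ P.lt (-j.val) i.val := by
  have hi := Pos.pos i
  have hj := Pos.pos j
  have hvij : i.val ≠ j.val := fun h => hij (Subtype.ext h)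
  rw [lt_nsymm P (show (-i.val) ≠ -j.val by omega), neg_neg]

end Aux

section PhiDef

variable {n : ℕ}

lemma Idx.neg_neg' (a : Idx n) : a.neg.neg = a := Subtype.ext (neg_neg a.val)

lemma Idx.neg_val (a : Idx n) : (Idx.neg a).val = -a.val := rfl

open scoped Classical in
/-- The signed-permutation reindexing map on indices: negate indices in `±S`. -/
noncomputable def sg (P : TypeCPoset n) (a : Idx n) : Idx n :=
  if inS P a.val ∨ inS P (-a.val) then Idx.neg a else a

lemma sg_sg (P : TypeCPoset n) (a : Idx n) : sg P (sg P a) = a := by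
  unfold sg
  by_cases h : inS P a.val ∨ inS P (-a.val)
  · rw [if_pos h]
    have hval : (Idx.neg a).val = -a.val := rfl
    have h' : inS P (Idx.neg a).val ∨ inS P (-(Idx.neg a).val) := by
      rw [hval, neg_neg]
      exact h.symm
    rw [if_pos h']
    exact Idx.neg_neg' a
  · rw [if_neg h, if_neg h]

open scoped Classical in
/-- Sign attached to the column/row `p` in the conjugation. -/
noncomputable def usgn (P : TypeCPoset n) (a : Idx n) : ℂ :=
  if inS P a.val then -1 else 1

open scoped Classical in
noncomputable def usgn' (P : TypeCPoset n) (a : Idx n) : ℂ :=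
  if inS P (-a.val) then -1 else 1

lemma usgn_sq (P : TypeCPoset n) (a : Idx n) : usgn P a * usgn P a = 1 := by
  unfold usgn; split_ifs <;> norm_num

lemma usgn'_sq (P : TypeCPoset n) (a : Idx n) : usgn' P a * usgn' P a = 1 := by
  unfold usgn'; split_ifs <;> norm_num

lemma usgn_sg (P : TypeCPoset n) (a : Idx n) : usgn P (sg P a) = usgn' P a := by
  unfold sg usgn usgn'
  by_cases h : inS P a.val ∨ inS P (-a.val)
  · rw [if_pos h, Idx.neg_val]
  · rw [if_neg h]
    push_neg at h
    rw [if_neg h.1, if_neg h.2]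

lemma usgn'_sg (P : TypeCPoset n) (a : Idx n) : usgn' P (sg P a) = usgn P a := by
  unfold sg usgn usgn'
  by_cases h : inS P a.val ∨ inS P (-a.val)
  · rw [if_pos h]
    have hval : -(Idx.neg a).val = a.val := neg_neg a.val
    by_cases h2 : inS P a.val
    · rw [if_pos h2, if_pos (show inS P (-(Idx.neg a).val) by rw [hval]; exact h2)]
    · rw [if_neg h2, if_neg (show ¬ inS P (-(Idx.neg a).val) by rw [hval]; exact h2)]
  · rw [if_neg h]
    push_neg at h
    rw [if_neg h.2, if_neg h.1]

/-- The conjugation map on matrices. -/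
noncomputable def phiFun (P : TypeCPoset n) (M : Mat n) : Mat n :=
  Matrix.of fun p q => usgn P p * usgn P q * M (sg P p) (sg P q)

noncomputable def phiInvFun (P : TypeCPoset n) (M : Mat n) : Mat n :=
  Matrix.of fun p q => usgn' P p * usgn' P q * M (sg P p) (sg P q)

/-- The conjugation as a linear equivalence. -/
noncomputable def Phi (P : TypeCPoset n) : Mat n ≃ₗ[ℂ] Mat n where
  toFun := phiFun P
  invFun := phiInvFun P
  map_add' M N := by
    ext p q
    simp only [phiFun, Matrix.of_apply, Matrix.add_apply]
    ring
  map_smul' c M := by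
    ext p q
    simp only [phiFun, Matrix.of_apply, Matrix.smul_apply, RingHom.id_apply, smul_eq_mul]
    ring
  left_inv M := by
    ext p q
    simp only [phiFun, phiInvFun, Matrix.of_apply, sg_sg, usgn_sg]
    have h1 := usgn'_sq P p
    have h2 := usgn'_sq P q
    calc usgn' P p * usgn' P q * (usgn' P p * usgn' P q * M p q)
        = (usgn' P p * usgn' P p) * ((usgn' P q * usgn' P q) * M p q) := by ring
      _ = M p q := by rw [h1, h2, one_mul, one_mul]
  right_inv M := by
    ext p q
    simp only [phiFun, phiInvFun, Matrix.of_apply, sg_sg, usgn'_sg]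
    have h1 := usgn_sq P p
    have h2 := usgn_sq P q
    calc usgn P p * usgn P q * (usgn P p * usgn P q * M p q)
        = (usgn P p * usgn P p) * ((usgn P q * usgn P q) * M p q) := by ring
      _ = M p q := by rw [h1, h2, one_mul, one_mul]

lemma Phi_apply (P : TypeCPoset n) (M : Mat n) : Phi P M = phiFun P M := rfl

lemma phiFun_sub (P : TypeCPoset n) (M N : Mat n) :
    phiFun P (M - N) = phiFun P M - phiFun P N := by
  rw [← Phi_apply, ← Phi_apply, ← Phi_apply, map_sub]

lemma phiFun_mul (P : TypeCPoset n) (M N : Mat n) :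
    phiFun P (M * N) = phiFun P M * phiFun P N := by
  ext p q
  simp only [phiFun, Matrix.of_apply, Matrix.mul_apply]
  rw [← Equiv.sum_comp (Function.Involutive.toPerm (sg P) (sg_sg P))
      (fun r => usgn P p * usgn P r * M (sg P p) (sg P r) *
        (usgn P r * usgn P q * N (sg P r) (sg P q)))]
  rw [Finset.mul_sum]
  apply Finset.sum_congr rfl
  intro r _
  simp only [Function.Involutive.coe_toPerm, Function.Involutive.toPerm, Equiv.coe_fn_mk, sg_sg, usgn_sg]
  have h := usgn'_sq P r
  calc usgn P p * usgn P q * (M (sg P p) r * N r (sg P q))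
      = (usgn' P r * usgn' P r) * (usgn P p * usgn P q * (M (sg P p) r * N r (sg P q))) := by
        rw [h, one_mul]
    _ = usgn P p * usgn' P r * M (sg P p) r * (usgn' P r * usgn P q * N r (sg P q)) := by ring

lemma Phi_bracket (P : TypeCPoset n) (M N : Mat n) :
    Phi P ⁅M, N⁆ = ⁅Phi P M, Phi P N⁆ := by
  simp only [Ring.lie_def, map_sub, Phi_apply, phiFun_mul]

lemma Phi_std (P : TypeCPoset n) (a b : Idx n) :
    phiFun P (Matrix.single a b 1) =
      (usgn' P a * usgn' P b) • Matrix.single (sg P a) (sg P b) 1 := by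
  ext p q
  simp only [phiFun, Matrix.single, Matrix.of_apply, Matrix.smul_apply, smul_eq_mul]
  by_cases hp : p = sg P a
  · by_cases hq : q = sg P b
    · subst hp; subst hq
      rw [if_pos ⟨(sg_sg P a).symm, (sg_sg P b).symm⟩, if_pos ⟨rfl, rfl⟩, usgn_sg, usgn_sg]
    · have hL : ¬ (a = sg P p ∧ b = sg P q) := fun hc => hq (by rw [hc.2, sg_sg])
      have hR : ¬ (sg P a = p ∧ sg P b = q) := fun hc => hq hc.2.symm
      rw [if_neg hL, if_neg hR, mul_zero, mul_zero]
  · have hL : ¬ (a = sg P p ∧ b = sg P q) := fun hc => hp (by rw [hc.1, sg_sg])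
    have hR : ¬ (sg P a = p ∧ sg P b = q) := fun hc => hp hc.1.symm
    rw [if_neg hL, if_neg hR, mul_zero, mul_zero]

end PhiDef

section Generators

variable {n : ℕ}

lemma inS_negval (P : TypeCPoset n) (i : Pos n) : ¬ inS P (-i.val) := by
  rintro ⟨h, -⟩
  have := Pos.pos i
  omega

lemma toIdx_val (i : Pos n) : (Pos.toIdx i).val = i.val := rfl

lemma toIdx_neg_val (i : Pos n) : (Idx.neg (Pos.toIdx i)).val = -i.val := rfl

lemma sg_toIdx_fix (P : TypeCPoset n) (i : Pos n) (h : ¬ inS P i.val) :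
    sg P i.toIdx = i.toIdx := by
  have hc : ¬ (inS P (Pos.toIdx i).val ∨ inS P (-(Pos.toIdx i).val)) := by
    rw [toIdx_val]
    rintro (h' | h')
    exacts [h h', inS_negval P i h']
  unfold sg
  rw [if_neg hc]

lemma sg_toIdxneg_fix (P : TypeCPoset n) (i : Pos n) (h : ¬ inS P i.val) :
    sg P i.toIdx.neg = i.toIdx.neg := by
  have hc : ¬ (inS P (Idx.neg (Pos.toIdx i)).val ∨ inS P (-(Idx.neg (Pos.toIdx i)).val)) := by
    rw [toIdx_neg_val, neg_neg]
    rintro (h' | h')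
    exacts [inS_negval P i h', h h']
  unfold sg
  rw [if_neg hc]

lemma sg_toIdx_swap (P : TypeCPoset n) (i : Pos n) (h : inS P i.val) :
    sg P i.toIdx = i.toIdx.neg := by
  have hc : inS P (Pos.toIdx i).val ∨ inS P (-(Pos.toIdx i).val) := Or.inl h
  unfold sg
  rw [if_pos hc]

lemma sg_toIdxneg_swap (P : TypeCPoset n) (i : Pos n) (h : inS P i.val) :
    sg P i.toIdx.neg = i.toIdx := by
  have hc : inS P (Idx.neg (Pos.toIdx i)).val ∨ inS P (-(Idx.neg (Pos.toIdx i)).val) :=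
    Or.inr (by rw [toIdx_neg_val, neg_neg]; exact h)
  unfold sg
  rw [if_pos hc]
  exact Idx.neg_neg' _

lemma usgn'_toIdx (P : TypeCPoset n) (i : Pos n) : usgn' P i.toIdx = 1 := by
  unfold usgn'
  exact if_neg (inS_negval P i)

lemma usgn'_toIdxneg_of_not (P : TypeCPoset n) (i : Pos n) (h : ¬ inS P i.val) :
    usgn' P i.toIdx.neg = 1 := by
  unfold usgn'
  apply if_neg
  intro h'
  apply h
  have h2 : inS P (-(-i.val)) := h'
  rwa [neg_neg] at h2

lemma usgn'_toIdxneg_of (P : TypeCPoset n) (i : Pos n) (h : inS P i.val) :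
    usgn' P i.toIdx.neg = -1 := by
  unfold usgn'
  apply if_pos
  show inS P (-(-i.val))
  rwa [neg_neg]

lemma phiFun_add (P : TypeCPoset n) (M N : Mat n) :
    phiFun P (M + N) = phiFun P M + phiFun P N := by
  rw [← Phi_apply, ← Phi_apply, ← Phi_apply, map_add]

lemma Phi_Dmat_fix (P : TypeCPoset n) (i : Pos n) (h : ¬ inS P i.val) :
    phiFun P (Dmat i) = Dmat i := by
  unfold Dmat
  rw [phiFun_sub, Phi_std, Phi_std, sg_toIdx_fix P i h, sg_toIdxneg_fix P i h,
    usgn'_toIdx, usgn'_toIdxneg_of_not P i h]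
  norm_num

lemma Phi_Dmat_swap (P : TypeCPoset n) (i : Pos n) (h : inS P i.val) :
    phiFun P (Dmat i) = -(Dmat i) := by
  unfold Dmat
  rw [phiFun_sub, Phi_std, Phi_std, sg_toIdx_swap P i h, sg_toIdxneg_swap P i h,
    usgn'_toIdx, usgn'_toIdxneg_of P i h]
  norm_num
  try abel

lemma Phi_Rdash (P : TypeCPoset n) (i j : Pos n) (hi : inS P i.val) (hj : ¬ inS P j.val) :
    phiFun P (Rdash i j) = -(Rpm i j) := by
  unfold Rdash Rpm
  rw [phiFun_sub, Phi_std, Phi_std, sg_toIdx_swap P i hi, sg_toIdxneg_swap P i hi,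
    sg_toIdx_fix P j hj, sg_toIdxneg_fix P j hj, usgn'_toIdx, usgn'_toIdx,
    usgn'_toIdxneg_of P i hi, usgn'_toIdxneg_of_not P j hj]
  norm_num
  try abel

lemma Phi_Rpm (P : TypeCPoset n) (i j : Pos n) (hi : ¬ inS P i.val) (hj : ¬ inS P j.val) :
    phiFun P (Rpm i j) = Rpm i j := by
  unfold Rpm
  rw [phiFun_add, Phi_std, Phi_std, sg_toIdx_fix P i hi, sg_toIdxneg_fix P i hi,
    sg_toIdx_fix P j hj, sg_toIdxneg_fix P j hj, usgn'_toIdx, usgn'_toIdx,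
    usgn'_toIdxneg_of_not P i hi, usgn'_toIdxneg_of_not P j hj]
  norm_num

lemma Phi_Eloop (P : TypeCPoset n) (i : Pos n) (h : ¬ inS P i.val) :
    phiFun P (Eloop i) = Eloop i := by
  unfold Eloop
  rw [Phi_std, sg_toIdx_fix P i h, sg_toIdxneg_fix P i h, usgn'_toIdx,
    usgn'_toIdxneg_of_not P i h]
  norm_num

lemma Rpm_self (i : Pos n) : Rpm i i = (2 : ℂ) • Eloop i := by
  unfold Rpm Eloop
  rw [two_smul]

lemma Rpm_comm (i j : Pos n) : Rpm i j = Rpm j i := add_comm _ _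

end Generators

section SpanEq

variable {n : ℕ}

lemma map_span_eq (P : TypeCPoset n) (h1 : P.HeightOne) :
    Submodule.map (Phi P : Mat n →ₗ[ℂ] Mat n) (Submodule.span ℂ (gcSet P)) =
      Submodule.span ℂ (gcSet (flat P)) := by
  rw [Submodule.map_span]
  apply le_antisymm <;> rw [Submodule.span_le]
  · rintro _ ⟨M, hM, rfl⟩
    simp only [SetLike.mem_coe, LinearEquiv.coe_coe]
    rcases hM with ⟨i, rfl⟩ | ⟨i, j, hrel, rfl⟩ | ⟨i, j, hr1, hr2, rfl⟩ | ⟨i, hr, rfl⟩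
    · -- Dmat
      rw [Phi_apply]
      by_cases h : inS P i.val
      · rw [Phi_Dmat_swap P i h]
        exact neg_mem (Submodule.subset_span (Or.inl ⟨i, rfl⟩))
      · rw [Phi_Dmat_fix P i h]
        exact Submodule.subset_span (Or.inl ⟨i, rfl⟩)
    · -- Rdash
      have hij : P.lt i.val j.val := (lt_posneg_iff P i j).mpr hrel
      have hi : inS P i.val := ⟨Pos.pos i, j.val, hij, Pos.pos j⟩
      have hj : ¬ inS P j.val := notinS_top P h1 hij
      rw [Phi_apply, Phi_Rdash P i j hi hj]
      refine neg_mem (Submodule.subset_span ?_)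
      refine Or.inr (Or.inr (Or.inl ⟨i, j, ?_, ?_, rfl⟩))
      · exact (flat_lt_pos P i j).mpr (Or.inr (Or.inr (Or.inl hij)))
      · exact (flat_lt_pos P j i).mpr (Or.inr (Or.inr (Or.inr hij)))
    · -- Rpm
      have hi : ¬ inS P i.val := notinS_top P h1 hr2
      have hj : ¬ inS P j.val := notinS_top P h1 hr1
      rw [Phi_apply, Phi_Rpm P i j hi hj]
      refine Submodule.subset_span (Or.inr (Or.inr (Or.inl ⟨i, j, ?_, ?_, rfl⟩)))
      · exact (flat_lt_pos P i j).mpr (Or.inl hr1)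
      · exact (flat_lt_pos P j i).mpr (Or.inl hr2)
    · -- Eloop
      have hi : ¬ inS P i.val := notinS_top P h1 hr
      rw [Phi_apply, Phi_Eloop P i hi]
      exact Submodule.subset_span (Or.inr (Or.inr (Or.inr
        ⟨i, (flat_lt_pos P i i).mpr (Or.inl hr), rfl⟩)))
  · intro M hM
    simp only [SetLike.mem_coe]
    rcases hM with ⟨i, rfl⟩ | ⟨i, j, hrel, rfl⟩ | ⟨i, j, hr1, hr2, rfl⟩ | ⟨i, hr, rfl⟩
    · -- Dmat
      by_cases h : inS P i.val
      · have heq : Dmat i = -((Phi P : Mat n →ₗ[ℂ] Mat n) (Dmat i)) := by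
          simp only [LinearEquiv.coe_coe, Phi_apply, Phi_Dmat_swap P i h, neg_neg]
        rw [heq]
        exact neg_mem (Submodule.subset_span ⟨Dmat i, Or.inl ⟨i, rfl⟩, rfl⟩)
      · refine Submodule.subset_span ⟨Dmat i, Or.inl ⟨i, rfl⟩, ?_⟩
        simp only [LinearEquiv.coe_coe, Phi_apply, Phi_Dmat_fix P i h]
    · -- Rdash : impossible in flat P
      exact absurd hrel (flat_lt_negneg P j i)
    · -- Rpm
      rcases (flat_lt_pos P i j).mp hr1 with h | h | h | h
      · by_cases hij : i = j
        · subst hij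
          rw [Rpm_self]
          refine Submodule.smul_mem _ _ (Submodule.subset_span
            ⟨Eloop i, Or.inr (Or.inr (Or.inr ⟨i, h, rfl⟩)), ?_⟩)
          simp only [LinearEquiv.coe_coe, Phi_apply, Phi_Eloop P i (notinS_top P h1 h)]
        · have h' : P.lt (-j.val) i.val := (lt_negpos_iff P i j hij).mp h
          refine Submodule.subset_span ⟨Rpm i j,
            Or.inr (Or.inr (Or.inl ⟨i, j, h, h', rfl⟩)), ?_⟩
          simp only [LinearEquiv.coe_coe, Phi_apply,
            Phi_Rpm P i j (notinS_top P h1 h') (notinS_top P h1 h)]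
      · by_cases hij : i = j
        · subst hij
          rw [Rpm_self]
          refine Submodule.smul_mem _ _ (Submodule.subset_span
            ⟨Eloop i, Or.inr (Or.inr (Or.inr ⟨i, h, rfl⟩)), ?_⟩)
          simp only [LinearEquiv.coe_coe, Phi_apply, Phi_Eloop P i (notinS_top P h1 h)]
        · have h' : P.lt (-i.val) j.val := (lt_negpos_iff P j i (Ne.symm hij)).mp h
          refine Submodule.subset_span ⟨Rpm i j,
            Or.inr (Or.inr (Or.inl ⟨i, j, h', h, rfl⟩)), ?_⟩
          simp only [LinearEquiv.coe_coe, Phi_apply,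
            Phi_Rpm P i j (notinS_top P h1 h) (notinS_top P h1 h')]
      · have hrelP : P.lt (-j.val) (-i.val) := (lt_posneg_iff P i j).mp h
        have hi : inS P i.val := ⟨Pos.pos i, j.val, h, Pos.pos j⟩
        have hj : ¬ inS P j.val := notinS_top P h1 h
        have heq : Rpm i j = -((Phi P : Mat n →ₗ[ℂ] Mat n) (Rdash i j)) := by
          simp only [LinearEquiv.coe_coe, Phi_apply, Phi_Rdash P i j hi hj, neg_neg]
        rw [heq]
        exact neg_mem (Submodule.subset_span
          ⟨Rdash i j, Or.inr (Or.inl ⟨i, j, hrelP, rfl⟩), rfl⟩)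
      · have hrelP : P.lt (-i.val) (-j.val) := (lt_posneg_iff P j i).mp h
        have hi : inS P j.val := ⟨Pos.pos j, i.val, h, Pos.pos i⟩
        have hj : ¬ inS P i.val := notinS_top P h1 h
        have heq : Rpm i j = -((Phi P : Mat n →ₗ[ℂ] Mat n) (Rdash j i)) := by
          simp only [LinearEquiv.coe_coe, Phi_apply, Phi_Rdash P j i hi hj, neg_neg]
          exact Rpm_comm i j
        rw [heq]
        exact neg_mem (Submodule.subset_span
          ⟨Rdash j i, Or.inr (Or.inl ⟨j, i, hrelP, rfl⟩), rfl⟩)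
    · -- Eloop
      rcases (flat_lt_pos P i i).mp hr with h | h | h | h
      · refine Submodule.subset_span ⟨Eloop i, Or.inr (Or.inr (Or.inr ⟨i, h, rfl⟩)), ?_⟩
        simp only [LinearEquiv.coe_coe, Phi_apply, Phi_Eloop P i (notinS_top P h1 h)]
      · refine Submodule.subset_span ⟨Eloop i, Or.inr (Or.inr (Or.inr ⟨i, h, rfl⟩)), ?_⟩
        simp only [LinearEquiv.coe_coe, Phi_apply, Phi_Eloop P i (notinS_top P h1 h)]
      · exact absurd rfl h.2
      · exact absurd rfl h.2

end SpanEq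

section IndexInv

variable {L L' : Type*} [LieRing L] [LieAlgebra ℂ L] [LieRing L'] [LieAlgebra ℂ L']

lemma mem_coadjKernel_iff (φ : Module.Dual ℂ L) (x : L) :
    x ∈ coadjKernel L φ ↔ ∀ y : L, φ ⁅x, y⁆ = 0 := Iff.rfl

lemma range_coadj_subset (e : L ≃ₗ[ℂ] L') (he : ∀ x y : L, e ⁅x, y⁆ = ⁅e x, e y⁆) :
    (Set.range fun φ : Module.Dual ℂ L => Module.finrank ℂ (coadjKernel L φ)) ⊆
      Set.range fun φ' : Module.Dual ℂ L' => Module.finrank ℂ (coadjKernel L' φ') := by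
  have hsymm : ∀ x' y' : L', e.symm ⁅x', y'⁆ = ⁅e.symm x', e.symm y'⁆ := by
    intro x' y'
    apply e.injective
    rw [he, e.apply_symm_apply, e.apply_symm_apply, e.apply_symm_apply]
  rintro _ ⟨φ, rfl⟩
  refine ⟨φ ∘ₗ (e.symm : L' →ₗ[ℂ] L), ?_⟩
  have hker : coadjKernel L' (φ ∘ₗ (e.symm : L' →ₗ[ℂ] L)) =
      (coadjKernel L φ).map (e : L →ₗ[ℂ] L') := by
    ext x'
    rw [Submodule.mem_map_equiv, mem_coadjKernel_iff, mem_coadjKernel_iff]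
    constructor
    · intro h y
      have := h (e y)
      simp only [LinearMap.comp_apply, LinearEquiv.coe_coe] at this
      rwa [hsymm, e.symm_apply_apply] at this
    · intro h y'
      simp only [LinearMap.comp_apply, LinearEquiv.coe_coe]
      rw [hsymm]
      exact h (e.symm y')
  simp only []
  rw [hker, LinearEquiv.finrank_map_eq]

lemma lieIndex_eq_of_equiv (e : L ≃ₗ[ℂ] L') (he : ∀ x y : L, e ⁅x, y⁆ = ⁅e x, e y⁆) :
    lieIndex L = lieIndex L' := by
  have hsymm : ∀ x' y' : L', e.symm ⁅x', y'⁆ = ⁅e.symm x', e.symm y'⁆ := by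
    intro x' y'
    apply e.injective
    rw [he, e.apply_symm_apply, e.apply_symm_apply, e.apply_symm_apply]
  unfold lieIndex
  congr 1
  exact Set.Subset.antisymm (range_coadj_subset e he) (range_coadj_subset e.symm hsymm)

end IndexInv

section MainPieces

variable {n : ℕ}

lemma lieIndex_eq_of_spans (P : TypeCPoset n) (h1 : P.HeightOne)
    (g g' : LieSubalgebra ℂ (Mat n))
    (hg : g.toSubmodule = Submodule.span ℂ (gcSet P))
    (hg' : g'.toSubmodule = Submodule.span ℂ (gcSet (flat P))) :
    lieIndex ↥g = lieIndex ↥g' := by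
  have hmap : Submodule.map (Phi P : Mat n →ₗ[ℂ] Mat n) g.toSubmodule = g'.toSubmodule := by
    rw [hg, hg', map_span_eq P h1]
  have memg : ∀ x : Mat n, x ∈ g ↔ x ∈ g.toSubmodule := fun _ => Iff.rfl
  have memg' : ∀ x : Mat n, x ∈ g' ↔ x ∈ g'.toSubmodule := fun _ => Iff.rfl
  have fwd : ∀ x : Mat n, x ∈ g → Phi P x ∈ g' := by
    intro x hx
    rw [memg'  _, ← hmap]
    exact ⟨x, (memg x).mp hx, rfl⟩
  have bwd : ∀ x : Mat n, x ∈ g' → (Phi P).symm x ∈ g := by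
    intro x hx
    rw [memg _]
    have : x ∈ Submodule.map (Phi P : Mat n →ₗ[ℂ] Mat n) g.toSubmodule := by
      rw [hmap]; exact (memg' x).mp hx
    rwa [Submodule.mem_map_equiv] at this
  let E : ↥g ≃ₗ[ℂ] ↥g' :=
    { toFun := fun x => ⟨Phi P x.val, fwd x.val x.property⟩
      invFun := fun y => ⟨(Phi P).symm y.val, bwd y.val y.property⟩
      map_add' := by
        intro x y
        apply Subtype.ext
        simp [map_add]
      map_smul' := by
        intro c x
        apply Subtype.ext
        show (Phi P) (c • (x : Mat n)) = c • (Phi P) (x : Mat n)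
        exact map_smul _ _ _
      left_inv := by
        intro x
        apply Subtype.ext
        simp
      right_inv := by
        intro y
        apply Subtype.ext
        simp }
  have hE : ∀ x y : ↥g, E ⁅x, y⁆ = ⁅E x, E y⁆ := by
    intro x y
    apply Subtype.ext
    show Phi P (⁅x, y⁆ : ↥g).val = (⁅E x, E y⁆ : ↥g').val
    rw [LieSubalgebra.coe_bracket, LieSubalgebra.coe_bracket, Phi_bracket]
    rfl
  exact lieIndex_eq_of_equiv E hE

lemma RG_flat (P : TypeCPoset n) : RG (flat P) = RG P := by
  ext i j
  show (i ≠ j ∧ _) ↔ (i ≠ j ∧ _)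
  constructor
  · rintro ⟨hne, h⟩
    refine ⟨hne, ?_⟩
    rcases h with h | h | h | h
    · rcases (flat_lt_pos P i j).mp h with h' | h' | h' | h'
      · exact Or.inl h'
      · exact Or.inr (Or.inl h')
      · exact Or.inr (Or.inr (Or.inr ((lt_negneg_iff P j i).mpr h')))
      · exact Or.inr (Or.inr (Or.inl ((lt_negneg_iff P i j).mpr h')))
    · rcases (flat_lt_pos P j i).mp h with h' | h' | h' | h'
      · exact Or.inr (Or.inl h')
      · exact Or.inl h'
      · exact Or.inr (Or.inr (Or.inl ((lt_negneg_iff P i j).mpr h')))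
      · exact Or.inr (Or.inr (Or.inr ((lt_negneg_iff P j i).mpr h')))
    · exact absurd h (flat_lt_negneg P i j)
    · exact absurd h (flat_lt_negneg P j i)
  · rintro ⟨hne, h⟩
    refine ⟨hne, ?_⟩
    rcases h with h | h | h | h
    · exact Or.inl ((flat_lt_pos P i j).mpr (Or.inl h))
    · exact Or.inr (Or.inl ((flat_lt_pos P j i).mpr (Or.inl h)))
    · exact Or.inl ((flat_lt_pos P i j).mpr
        (Or.inr (Or.inr (Or.inr ((lt_negneg_iff P i j).mp h)))))
    · exact Or.inl ((flat_lt_pos P i j).mpr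
        (Or.inr (Or.inr (Or.inl ((lt_negneg_iff P j i).mp h)))))

lemma flat_NDE_iff (P : TypeCPoset n) (i j : Pos n) :
    NonDashedEdge (flat P) i j ↔
      NonDashedEdge P i j ∨ (P.lt i.val j.val ∨ P.lt j.val i.val) := by
  unfold NonDashedEdge
  rw [flat_lt_pos P i j, flat_lt_pos P j i]
  tauto

lemma flat_not_DE (P : TypeCPoset n) (i j : Pos n) : ¬ DashedEdge (flat P) i j := by
  rintro (h | h)
  exacts [flat_lt_negneg P i j h, flat_lt_negneg P j i h]

lemma NDE_DE_absurd (P : TypeCPoset n) (h1 : P.HeightOne) (i j : Pos n)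
    (hnd : NonDashedEdge P i j) (hd : DashedEdge P i j) : False := by
  rcases hnd with h | h <;> rcases hd with h' | h'
  · exact h1 _ _ _ h ((lt_negneg_iff P i j).mp h')
  · exact h1 _ _ _ h' h
  · exact h1 _ _ _ h' h
  · exact h1 _ _ _ h ((lt_negneg_iff P j i).mp h')

end MainPieces

section Edges

variable {n : ℕ}

lemma flat_edgesD_empty (P : TypeCPoset n) : edgesD (flat P) = ∅ := by
  ext e
  simp only [TypeCPoset.edgesD, Finset.mem_filter, Finset.mem_univ, true_and,
    Finset.notMem_empty, iff_false]
  rintro ⟨i, j, -, -, hD⟩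
  exact flat_not_DE P i j hD

lemma flat_edgesND (P : TypeCPoset n) : edgesND (flat P) = edgesND P ∪ edgesD P := by
  ext e
  simp only [TypeCPoset.edgesND, TypeCPoset.edgesD, Finset.mem_filter, Finset.mem_univ,
    true_and, Finset.mem_union]
  constructor
  · rintro ⟨i, j, rfl, hnd⟩
    rcases (flat_NDE_iff P i j).mp hnd with h | h | h
    · exact Or.inl ⟨i, j, rfl, h⟩
    · exact Or.inr ⟨i, j, rfl, fun he => h.2 (congrArg Subtype.val he),
        Or.inr ((lt_posneg_iff P i j).mp h)⟩
    · exact Or.inr ⟨i, j, rfl, fun he => h.2 ((congrArg Subtype.val he).symm),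
        Or.inl ((lt_posneg_iff P j i).mp h)⟩
  · rintro (⟨i, j, rfl, h⟩ | ⟨i, j, rfl, hne, hD⟩)
    · exact ⟨i, j, rfl, (flat_NDE_iff P i j).mpr (Or.inl h)⟩
    · refine ⟨i, j, rfl, (flat_NDE_iff P i j).mpr (Or.inr ?_)⟩
      rcases hD with h | h
      · exact Or.inr ((lt_negneg_iff P i j).mp h)
      · exact Or.inl ((lt_negneg_iff P j i).mp h)

lemma edges_disjoint (P : TypeCPoset n) (h1 : P.HeightOne) :
    Disjoint (edgesND P) (edgesD P) := by
  rw [Finset.disjoint_left]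
  intro e he hd
  simp only [TypeCPoset.edgesND, TypeCPoset.edgesD, Finset.mem_filter, Finset.mem_univ,
    true_and] at he hd
  obtain ⟨i, j, rfl, hnd⟩ := he
  obtain ⟨k, l, hkl, hne, hD⟩ := hd
  rcases Sym2.eq_iff.mp hkl with ⟨rfl, rfl⟩ | ⟨rfl, rfl⟩
  · exact NDE_DE_absurd P h1 i j hnd hD
  · exact NDE_DE_absurd P h1 i j hnd (hD.elim (fun h => Or.inr h) (fun h => Or.inl h))

lemma flat_numEdges (P : TypeCPoset n) (h1 : P.HeightOne) :
    numEdges (flat P) = numEdges P := by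
  unfold TypeCPoset.numEdges
  rw [flat_edgesD_empty, flat_edgesND, Finset.card_empty, add_zero,
    Finset.card_union_of_disjoint (edges_disjoint P h1)]

lemma flat_height01 (P : TypeCPoset n) (hl : ∃ v : Pos n, P.HasLoopAt v) :
    (flat P).Height01 := by
  refine ⟨flat_heightOne P, ?_, ?_⟩
  · intro i j hi hj hlt
    rw [flat_lt_iff] at hlt
    omega
  · obtain ⟨v, hv⟩ := hl
    have := Pos.pos v
    exact ⟨-v.val, v.val, (flat_lt_iff P).mpr ⟨by omega, by omega, Or.inl hv⟩⟩

lemma flat_hasLoop (P : TypeCPoset n) {v : Pos n} (hv : P.HasLoopAt v) :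
    (flat P).HasLoopAt v :=
  (flat_lt_pos P v v).mpr (Or.inl hv)

end Edges

/-- **Proposition.** Let `P` be a connected, non-separable type-C poset of height `(1,1)`
such that `RG(P)` contains a self-loop.  Then there exists a connected type-C poset `P'`
of height `(0,1)` (on the same vertex set, so `|V(P)| = |V(P')|`) such that
`|E(P)| = |E(P')|`, `RG(P')` contains a self-loop, and `ind g_C(P) = ind g_C(P')`. -/
theorem selfLoop_height11_reduction (n : ℕ) (P : TypeCPoset n)
    (hconn : (TypeCPoset.RG P).Connected) (hns : ¬ P.Separable)
    (h11 : P.Height11) (hloop : ∃ v : Pos n, P.HasLoopAt v) :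
    ∃ P' : TypeCPoset n,
      (TypeCPoset.RG P').Connected ∧ P'.Height01 ∧
      Fintype.card (Pos n) = Fintype.card (Pos n) ∧
      P'.numEdges = P.numEdges ∧ (∃ v : Pos n, P'.HasLoopAt v) ∧
      ∀ (g g' : LieSubalgebra ℂ (Mat n)),
        g.toSubmodule = Submodule.span ℂ (TypeCPoset.gcSet P) →
        g'.toSubmodule = Submodule.span ℂ (TypeCPoset.gcSet P') →
        lieIndex ↥g = lieIndex ↥g' := by
  refine ⟨flat P, ?_, flat_height01 P hloop, rfl, flat_numEdges P h11.1, ?_, ?_⟩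
  · rw [RG_flat]
    exact hconn
  · obtain ⟨v, hv⟩ := hloop
    exact ⟨v, flat_hasLoop P hv⟩
  · intro g g' hg hg'
    exact lieIndex_eq_of_spans P h11.1 g g' hg hg'


end LiePoset
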